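/- arXiv:math/0101077 — 3 statements merged into one kernel-verified Lean document; each statement's English description precedes it below -/
import Mathlib

section
/- The one-step update map of the conservative LLG integration scheme preserves unit norm: if ‖m‖ = 1 and ‖h‖ = 1, then the vector m⁺ = [( (m·h) cosh(gHΔt) + sinh(gHΔt) ) / D] h + [1/D] (cos(HΔt) Id + sin(HΔt) (h × ·)) (h × (m × h)), where D = cosh(gHΔt) + (m·h) sinh(gHΔt), satisfies ‖m⁺‖ = 1. -/
open RealInnerProductSpace

noncomputable def cross3 (a b : EuclideanSpace ℝ (Fin 3)) : EuclideanSpace ℝ (Fin 3) :=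
  (WithLp.equiv 2 (Fin 3 → ℝ)).symm
    (crossProduct ((WithLp.equiv 2 (Fin 3 → ℝ)) a) ((WithLp.equiv 2 (Fin 3 → ℝ)) b))

lemma inner_eq_dot (a b : EuclideanSpace ℝ (Fin 3)) :
    ⟪a, b⟫ = dotProduct ((WithLp.equiv 2 (Fin 3 → ℝ)) a) ((WithLp.equiv 2 (Fin 3 → ℝ)) b) := by
  rw [EuclideanSpace.inner_eq_star_dotProduct, dotProduct_comm]; rfl

lemma equiv_cross3 (a b : EuclideanSpace ℝ (Fin 3)) :
    (WithLp.equiv 2 (Fin 3 → ℝ)) (cross3 a b) =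
      crossProduct ((WithLp.equiv 2 (Fin 3 → ℝ)) a) ((WithLp.equiv 2 (Fin 3 → ℝ)) b) := by
  simp [cross3]

theorem scheme_preserves_norm (g H Δt : ℝ) (m h : EuclideanSpace ℝ (Fin 3))
    (hm : ‖m‖ = 1) (hh : ‖h‖ = 1)
    (D : ℝ) (hD : D = Real.cosh (g * H * Δt) + ⟪m, h⟫ * Real.sinh (g * H * Δt))
    (hDpos : 0 < D) :
    ‖((⟪m, h⟫ * Real.cosh (g * H * Δt) + Real.sinh (g * H * Δt)) / D) • h +
      (1 / D) • ((Real.cos (H * Δt)) • cross3 h (cross3 m h) +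
        (Real.sin (H * Δt)) • cross3 h (cross3 h (cross3 m h)))‖ = 1 := by
  set u := (WithLp.equiv 2 (Fin 3 → ℝ)) m with hu
  set v := (WithLp.equiv 2 (Fin 3 → ℝ)) h with hv
  set c := ⟪m, h⟫ with hc
  set P := cross3 h (cross3 m h) with hP
  set Q := cross3 h (cross3 h (cross3 m h)) with hQ
  have huu : dotProduct u u = 1 := by
    rw [← inner_eq_dot, real_inner_self_eq_norm_sq, hm]; norm_num
  have hvv : dotProduct v v = 1 := by
    rw [← inner_eq_dot, real_inner_self_eq_norm_sq, hh]; norm_num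
  have huv : dotProduct u v = c := (inner_eq_dot m h).symm
  have hvu : dotProduct v u = c := (dotProduct_comm v u).trans huv
  have heP : (WithLp.equiv 2 (Fin 3 → ℝ)) P = crossProduct v (crossProduct u v) := by
    rw [hP, equiv_cross3, equiv_cross3]
  have heQ : (WithLp.equiv 2 (Fin 3 → ℝ)) Q = crossProduct v ((WithLp.equiv 2 (Fin 3 → ℝ)) P) := by
    rw [hQ, equiv_cross3]
  have hvX : dotProduct v (crossProduct u v) = 0 := dot_cross_self u v
  have hXX : dotProduct (crossProduct u v) (crossProduct u v) = 1 - c ^ 2 := by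
    rw [cross_dot_cross, huu, hvv, huv, hvu]; ring
  have hhP : ⟪h, P⟫ = 0 := by
    rw [inner_eq_dot, heP, ← hv]; exact dot_self_cross v (crossProduct u v)
  have hhQ : ⟪h, Q⟫ = 0 := by
    rw [inner_eq_dot, heQ, ← hv]; exact dot_self_cross v _
  have hPP : ⟪P, P⟫ = 1 - c ^ 2 := by
    rw [inner_eq_dot, heP, cross_dot_cross, hvv, hvX, hXX]; ring
  have hPQ : ⟪P, Q⟫ = 0 := by
    rw [inner_eq_dot, heQ]; exact dot_cross_self v _
  have hQQ : ⟪Q, Q⟫ = 1 - c ^ 2 := by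
    rw [inner_eq_dot, heQ, cross_dot_cross, hvv]
    have : dotProduct v ((WithLp.equiv 2 (Fin 3 → ℝ)) P) = 0 := by
      rw [heP]; exact dot_self_cross v _
    rw [this, ← inner_eq_dot, hPP]; ring
  have hhh : ⟪h, h⟫ = (1 : ℝ) := by rw [real_inner_self_eq_norm_sq, hh]; norm_num
  have hPh : ⟪P, h⟫ = 0 := by rw [real_inner_comm]; exact hhP
  have hQh : ⟪Q, h⟫ = 0 := by rw [real_inner_comm]; exact hhQ
  have hQP : ⟪Q, P⟫ = 0 := by rw [real_inner_comm]; exact hPQ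
  have hD0 : D ≠ 0 := ne_of_gt hDpos
  set C := Real.cosh (g * H * Δt) with hC
  set S := Real.sinh (g * H * Δt) with hS
  set co := Real.cos (H * Δt) with hco
  set si := Real.sin (H * Δt) with hsi
  have key : ⟪((c * C + S) / D) • h + (1 / D) • (co • P + si • Q),
      ((c * C + S) / D) • h + (1 / D) • (co • P + si • Q)⟫ = 1 := by
    simp only [inner_add_left, inner_add_right, real_inner_smul_left, real_inner_smul_right,
      hhh, hhP, hhQ, hPh, hQh, hPP, hQQ, hPQ, hQP]
    have hcosh : C ^ 2 - S ^ 2 = 1 := by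
      rw [hC, hS]; have := Real.cosh_sq_sub_sinh_sq (g * H * Δt); nlinarith [this]
    have hpyth : co ^ 2 + si ^ 2 = 1 := by rw [hco, hsi]; exact Real.cos_sq_add_sin_sq _
    field_simp
    linear_combination (c ^ 2 - 1) * hcosh + (1 - c ^ 2) * hpyth - (D + C + c * S) * hD
  have h2 : ‖((c * C + S) / D) • h + (1 / D) • (co • P + si • Q)‖ ^ 2 = 1 := by
    rw [← real_inner_self_eq_norm_sq]; exact key
  calc ‖((c * C + S) / D) • h + (1 / D) • (co • P + si • Q)‖
      = Real.sqrt (‖((c * C + S) / D) • h + (1 / D) • (co • P + si • Q)‖ ^ 2) :=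
        (Real.sqrt_sq (norm_nonneg _)).symm
    _ = 1 := by rw [h2, Real.sqrt_one]
end

section
/- If m is a unit vector satisfying the LLG equation m' = -H[(m × h) + g m × (m × h)] with h a unit vector, then the energy function E(s) = 1 - ⟪m(s), h⟫ is nonincreasing when gH ≥ 0: E'(s) = -gH(1 - ⟪m(s),h⟫²) ≤ 0. -/
open RealInnerProductSpace

lemma cross3_inner_self (a b : EuclideanSpace ℝ (Fin 3)) : ⟪cross3 a b, b⟫ = 0 := by
  simp only [cross3, crossProduct, PiLp.inner_apply, Fin.sum_univ_three,
    WithLp.equiv_symm_apply, PiLp.toLp_apply, WithLp.equiv_apply, LinearMap.mk₂_apply,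
    Matrix.cons_val_zero, Matrix.cons_val_one, Matrix.head_cons, Matrix.cons_val_two,
    Matrix.tail_cons, RCLike.inner_apply, conj_trivial]
  ring

lemma cross3_triple (a b : EuclideanSpace ℝ (Fin 3)) :
    ⟪cross3 a (cross3 a b), b⟫ = ⟪a, b⟫ ^ 2 - ⟪a, a⟫ * ⟪b, b⟫ := by
  simp only [cross3, crossProduct, PiLp.inner_apply, Fin.sum_univ_three,
    WithLp.equiv_symm_apply, PiLp.toLp_apply, WithLp.equiv_apply, LinearMap.mk₂_apply,
    Matrix.cons_val_zero, Matrix.cons_val_one, Matrix.head_cons, Matrix.cons_val_two,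
    Matrix.tail_cons, RCLike.inner_apply, conj_trivial]
  ring

theorem llg_energy_decreasing (g H : ℝ) (hgH : 0 ≤ g * H)
    (h : EuclideanSpace ℝ (Fin 3)) (hh : ‖h‖ = 1)
    (m : ℝ → EuclideanSpace ℝ (Fin 3)) (hm : Differentiable ℝ m)
    (hnorm : ∀ s, ‖m s‖ = 1)
    (heq : ∀ s, deriv m s =
      (-H) • (cross3 (m s) h + g • cross3 (m s) (cross3 (m s) h))) :
    ∀ s, deriv (fun s => 1 - ⟪m s, h⟫) s = -(g * H) * (1 - ⟪m s, h⟫ ^ 2) ∧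
      -(g * H) * (1 - ⟪m s, h⟫ ^ 2) ≤ 0 := by
  intro s
  have hsq : ⟪m s, h⟫ ^ 2 ≤ 1 := by
    have := abs_real_inner_le_norm (m s) h
    rw [hnorm s, hh, one_mul] at this
    nlinarith [abs_nonneg ⟪m s, h⟫, sq_abs ⟪m s, h⟫]
  have hinner : ⟪deriv m s, h⟫ = g * H * (1 - ⟪m s, h⟫ ^ 2) := by
    have hmm : ⟪m s, m s⟫ = 1 := by
      rw [real_inner_self_eq_norm_sq, hnorm s]; norm_num
    have hhh : ⟪h, h⟫ = 1 := by
      rw [real_inner_self_eq_norm_sq, hh]; norm_num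
    rw [heq s, real_inner_smul_left, inner_add_left, real_inner_smul_left,
      cross3_inner_self, cross3_triple, hmm, hhh]
    ring
  have hd : HasDerivAt (fun s => 1 - ⟪m s, h⟫) (-(g * H * (1 - ⟪m s, h⟫ ^ 2))) s := by
    have h1 : HasDerivAt (fun s => ⟪m s, h⟫) (g * H * (1 - ⟪m s, h⟫ ^ 2)) s := by
      have := ((hm s).hasDerivAt.inner ℝ (hasDerivAt_const s h))
      simpa [hinner] using this
    exact h1.const_sub (1:ℝ)
  refine ⟨by rw [hd.deriv]; ring, ?_⟩
  have : 0 ≤ 1 - ⟪m s, h⟫ ^ 2 := by linarith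
  nlinarith
end

section
/- The integration scheme m_{n+1} = F(m_n) given by formula (26) is exact for constant field: if m solves m' = -H[(m × h) + g m × (m × h)] on [t, t+Δt] with H, h constant, ‖h‖ = 1, ‖m(t)‖ = 1, and ⟪m(t), h⟫ > -1, then m(t+Δt) equals the scheme's update applied to m(t). In particular the scheme has zero local truncation error for piecewise-constant fields. -/
open RealInnerProductSpace

namespace SchemeExactAux

lemma cross3_apply (a b : EuclideanSpace ℝ (Fin 3)) :
    cross3 a b = ![a 1 * b 2 - a 2 * b 1, a 2 * b 0 - a 0 * b 2, a 0 * b 1 - a 1 * b 0] := by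
  simp [cross3, crossProduct]

lemma grassmann (a b c : EuclideanSpace ℝ (Fin 3)) :
    cross3 a (cross3 b c) = ⟪a, c⟫ • b - ⟪a, b⟫ • c := by
  ext i
  fin_cases i <;>
    simp [cross3_apply, PiLp.inner_apply, Fin.sum_univ_three] <;> ring

lemma cross3_anticomm (a b : EuclideanSpace ℝ (Fin 3)) : cross3 a b = -cross3 b a := by
  ext i; fin_cases i <;> simp [cross3_apply] <;> ring

lemma cross3_self (a : EuclideanSpace ℝ (Fin 3)) : cross3 a a = 0 := by
  ext i; fin_cases i <;> simp [cross3_apply] <;> ring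

lemma cross3_add_left (a b c : EuclideanSpace ℝ (Fin 3)) :
    cross3 (a + b) c = cross3 a c + cross3 b c := by
  ext i; fin_cases i <;> simp [cross3_apply] <;> ring

lemma cross3_sub_right (a b c : EuclideanSpace ℝ (Fin 3)) :
    cross3 a (b - c) = cross3 a b - cross3 a c := by
  ext i; fin_cases i <;> simp [cross3_apply] <;> ring

lemma cross3_smul_left (r : ℝ) (a b : EuclideanSpace ℝ (Fin 3)) :
    cross3 (r • a) b = r • cross3 a b := by
  ext i; fin_cases i <;> simp [cross3_apply] <;> ring

lemma cross3_smul_right (r : ℝ) (a b : EuclideanSpace ℝ (Fin 3)) :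
    cross3 a (r • b) = r • cross3 a b := by
  ext i; fin_cases i <;> simp [cross3_apply] <;> ring

lemma inner_cross3_left (a b : EuclideanSpace ℝ (Fin 3)) : ⟪cross3 a b, a⟫ = 0 := by
  simp [cross3_apply, PiLp.inner_apply, Fin.sum_univ_three]; ring

lemma inner_cross3_right (a b : EuclideanSpace ℝ (Fin 3)) : ⟪cross3 a b, b⟫ = 0 := by
  simp [cross3_apply, PiLp.inner_apply, Fin.sum_univ_three]; ring

lemma lagrange (a b : EuclideanSpace ℝ (Fin 3)) :
    ⟪cross3 a b, cross3 a b⟫ + ⟪a, b⟫ ^ 2 = ⟪a, a⟫ * ⟪b, b⟫ := by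
  rw [PiLp.inner_apply, PiLp.inner_apply, PiLp.inner_apply, PiLp.inner_apply]
  simp [cross3_apply, Fin.sum_univ_three]; ring

lemma norm_cross3_le (a b : EuclideanSpace ℝ (Fin 3)) : ‖cross3 a b‖ ≤ ‖a‖ * ‖b‖ := by
  have h := lagrange a b
  rw [real_inner_self_eq_norm_sq, real_inner_self_eq_norm_sq, real_inner_self_eq_norm_sq] at h
  nlinarith [norm_nonneg (cross3 a b), norm_nonneg a, norm_nonneg b, sq_nonneg ⟪a,b⟫,
    mul_nonneg (norm_nonneg a) (norm_nonneg b)]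

lemma vf_lip (g H : ℝ) (h : EuclideanSpace ℝ (Fin 3)) (hh : ‖h‖ = 1) :
    LipschitzOnWith (Real.toNNReal (|H| * (1 + 2 * |g|)))
      (fun x => (-H) • (cross3 x h + g • cross3 x (cross3 x h)))
      (Metric.closedBall (0 : EuclideanSpace ℝ (Fin 3)) 1) := by
  apply LipschitzOnWith.of_dist_le_mul
  intro x hx y hy
  rw [Metric.mem_closedBall, dist_zero_right] at hx hy
  rw [dist_eq_norm, dist_eq_norm]
  have key : (-H) • (cross3 x h + g • cross3 x (cross3 x h)) -
      (-H) • (cross3 y h + g • cross3 y (cross3 y h)) =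
      (-H) • (cross3 (x - y) h + g • (cross3 (x - y) (cross3 x h) + cross3 y (cross3 (x - y) h))) := by
    ext i
    fin_cases i <;>
      simp [cross3_apply, PiLp.sub_apply, PiLp.add_apply, PiLp.smul_apply] <;> ring
  rw [key]
  have e1 : ‖cross3 (x - y) h‖ ≤ ‖x - y‖ := by
    simpa [hh] using norm_cross3_le (x - y) h
  have e2 : ‖cross3 (x - y) (cross3 x h)‖ ≤ ‖x - y‖ := by
    calc ‖cross3 (x - y) (cross3 x h)‖ ≤ ‖x - y‖ * ‖cross3 x h‖ := norm_cross3_le _ _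
    _ ≤ ‖x - y‖ * (‖x‖ * ‖h‖) := by
        exact mul_le_mul_of_nonneg_left (norm_cross3_le x h) (norm_nonneg _)
    _ ≤ ‖x - y‖ := by rw [hh]; nlinarith [norm_nonneg (x - y)]
  have e3 : ‖cross3 y (cross3 (x - y) h)‖ ≤ ‖x - y‖ := by
    calc ‖cross3 y (cross3 (x - y) h)‖ ≤ ‖y‖ * ‖cross3 (x - y) h‖ := norm_cross3_le _ _
    _ ≤ 1 * ‖x - y‖ := mul_le_mul hy e1 (norm_nonneg _) zero_le_one
    _ = ‖x - y‖ := one_mul _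
  have etot : ‖cross3 (x - y) h + g • (cross3 (x - y) (cross3 x h) + cross3 y (cross3 (x - y) h))‖
      ≤ (1 + 2 * |g|) * ‖x - y‖ := by
    calc _ ≤ ‖cross3 (x - y) h‖ + ‖g • (cross3 (x - y) (cross3 x h) + cross3 y (cross3 (x - y) h))‖ :=
        norm_add_le _ _
    _ ≤ ‖x - y‖ + |g| * (‖x - y‖ + ‖x - y‖) := by
        rw [norm_smul, Real.norm_eq_abs]
        gcongr
        exact (norm_add_le _ _).trans (by gcongr)
    _ = (1 + 2 * |g|) * ‖x - y‖ := by ring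
  rw [norm_smul, Real.norm_eq_abs, abs_neg]
  have hk : (Real.toNNReal (|H| * (1 + 2 * |g|)) : ℝ) = |H| * (1 + 2 * |g|) := by
    rw [Real.coe_toNNReal]
    positivity
  rw [hk, mul_assoc]
  exact mul_le_mul_of_nonneg_left etot (abs_nonneg H)

noncomputable def phiSol (g H c t : ℝ) (h p q : EuclideanSpace ℝ (Fin 3)) (s : ℝ) :
    EuclideanSpace ℝ (Fin 3) :=
  ((c * Real.cosh (g * H * (s - t)) + Real.sinh (g * H * (s - t))) /
      (Real.cosh (g * H * (s - t)) + c * Real.sinh (g * H * (s - t)))) • h +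
  (Real.cos (H * (s - t)) / (Real.cosh (g * H * (s - t)) + c * Real.sinh (g * H * (s - t)))) • p +
  (Real.sin (H * (s - t)) / (Real.cosh (g * H * (s - t)) + c * Real.sinh (g * H * (s - t)))) • q

lemma Dpos (c u : ℝ) (hc : -1 < c) (hc1 : c ≤ 1) : 0 < Real.cosh u + c * Real.sinh u := by
  rcases le_or_gt 0 (Real.sinh u) with hs | hs
  · nlinarith [Real.cosh_sub_sinh u, Real.exp_pos (-u)]
  · nlinarith [Real.sinh_add_cosh u, Real.exp_pos u]

lemma alg_vec (H g c Ch Sh Cv Sv : ℝ) (h p q : EuclideanSpace ℝ (Fin 3))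
    (hhh : cross3 h h = 0) (hhp : cross3 h p = q) (hhq : cross3 h q = -p)
    (hph : cross3 p h = -q) (hqh : cross3 q h = p)
    (hpp : cross3 p p = 0) (hqq : cross3 q q = 0)
    (hpq : cross3 p q = (1 - c ^ 2) • h) (hqp : cross3 q p = -((1 - c ^ 2) • h))
    (hid : Ch ^ 2 - Sh ^ 2 = 1) (hCS : Cv ^ 2 + Sv ^ 2 = 1)
    (hDne : Ch + c * Sh ≠ 0) :
    (-H) • (cross3 (((c * Ch + Sh) / (Ch + c * Sh)) • h + (Cv / (Ch + c * Sh)) • p +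
        (Sv / (Ch + c * Sh)) • q) h +
      g • cross3 (((c * Ch + Sh) / (Ch + c * Sh)) • h + (Cv / (Ch + c * Sh)) • p +
        (Sv / (Ch + c * Sh)) • q)
        (cross3 (((c * Ch + Sh) / (Ch + c * Sh)) • h + (Cv / (Ch + c * Sh)) • p +
          (Sv / (Ch + c * Sh)) • q) h)) =
    ((g * H * (Ch + c * Sh) * (Ch + c * Sh) - (c * Ch + Sh) * (g * H * (c * Ch + Sh))) /
        (Ch + c * Sh) ^ 2) • h +
    ((-Sv * H * (Ch + c * Sh) - Cv * (g * H * (c * Ch + Sh))) / (Ch + c * Sh) ^ 2) • p +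
    ((Cv * H * (Ch + c * Sh) - Sv * (g * H * (c * Ch + Sh))) / (Ch + c * Sh) ^ 2) • q := by
  have exp1 : cross3 (((c * Ch + Sh) / (Ch + c * Sh)) • h + (Cv / (Ch + c * Sh)) • p +
      (Sv / (Ch + c * Sh)) • q) h = (Sv / (Ch + c * Sh)) • p - (Cv / (Ch + c * Sh)) • q := by
    simp only [cross3_add_left, cross3_smul_left, hhh, hph, hqh]
    module
  rw [exp1]
  have exp2 : cross3 (((c * Ch + Sh) / (Ch + c * Sh)) • h + (Cv / (Ch + c * Sh)) • p +
      (Sv / (Ch + c * Sh)) • q) ((Sv / (Ch + c * Sh)) • p - (Cv / (Ch + c * Sh)) • q)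
      = (((c * Ch + Sh) / (Ch + c * Sh)) * (Cv / (Ch + c * Sh))) • p
        + (((c * Ch + Sh) / (Ch + c * Sh)) * (Sv / (Ch + c * Sh))) • q
        - (((Cv / (Ch + c * Sh)) ^ 2 + (Sv / (Ch + c * Sh)) ^ 2) * (1 - c ^ 2)) • h := by
    simp only [cross3_sub_right, cross3_add_left, cross3_smul_left, cross3_smul_right,
      hhp, hhq, hpp, hpq, hqp, hqq]
    match_scalars <;> ring
  rw [exp2]
  match_scalars
  · field_simp
    ring
  · field_simp
    ring
  · field_simp
    linear_combination (H * g * (1 - c ^ 2)) * hCS - (g * H * (1 - c ^ 2)) * hid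

lemma phiSol_hasDeriv (g H c t : ℝ) (hc : -1 < c) (hc1 : c ≤ 1)
    (h p q : EuclideanSpace ℝ (Fin 3))
    (hhh : cross3 h h = 0) (hhp : cross3 h p = q) (hhq : cross3 h q = -p)
    (hph : cross3 p h = -q) (hqh : cross3 q h = p)
    (hpp : cross3 p p = 0) (hqq : cross3 q q = 0)
    (hpq : cross3 p q = (1 - c ^ 2) • h) (hqp : cross3 q p = -((1 - c ^ 2) • h)) (s : ℝ) :
    HasDerivAt (phiSol g H c t h p q)
      ((-H) • (cross3 (phiSol g H c t h p q s) h +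
        g • cross3 (phiSol g H c t h p q s) (cross3 (phiSol g H c t h p q s) h))) s := by
  have hu : HasDerivAt (fun s : ℝ => g * H * (s - t)) (g * H) s := by
    simpa using ((hasDerivAt_id s).sub_const t).const_mul (g * H)
  have hw : HasDerivAt (fun s : ℝ => H * (s - t)) H s := by
    simpa using ((hasDerivAt_id s).sub_const t).const_mul H
  have hDne : Real.cosh (g * H * (s - t)) + c * Real.sinh (g * H * (s - t)) ≠ 0 :=
    ne_of_gt (Dpos c _ hc hc1)
  have hD : HasDerivAt (fun s : ℝ =>
      Real.cosh (g * H * (s - t)) + c * Real.sinh (g * H * (s - t)))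
      (Real.sinh (g * H * (s - t)) * (g * H) + c * (Real.cosh (g * H * (s - t)) * (g * H))) s :=
    (hu.cosh).add ((hu.sinh).const_mul c)
  have hN : HasDerivAt (fun s : ℝ =>
      c * Real.cosh (g * H * (s - t)) + Real.sinh (g * H * (s - t)))
      (c * (Real.sinh (g * H * (s - t)) * (g * H)) + Real.cosh (g * H * (s - t)) * (g * H)) s :=
    ((hu.cosh).const_mul c).add (hu.sinh)
  have hA := hN.div hD hDne
  have hB := (hw.cos).div hD hDne
  have hE := (hw.sin).div hD hDne
  have hφ := ((hA.smul_const h).add (hB.smul_const p)).add (hE.smul_const q)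
  convert hφ using 1
  case e'_4 => rfl
  case e'_5 => rfl
  case e'_6 => rfl
  case e'_8 => rfl
  have hφs : phiSol g H c t h p q s =
      ((c * Real.cosh (g * H * (s - t)) + Real.sinh (g * H * (s - t))) /
        (Real.cosh (g * H * (s - t)) + c * Real.sinh (g * H * (s - t)))) • h +
      (Real.cos (H * (s - t)) / (Real.cosh (g * H * (s - t)) + c * Real.sinh (g * H * (s - t)))) • p +
      (Real.sin (H * (s - t)) / (Real.cosh (g * H * (s - t)) + c * Real.sinh (g * H * (s - t)))) • q := rfl
  rw [hφs]
  rw [alg_vec H g c (Real.cosh (g * H * (s - t))) (Real.sinh (g * H * (s - t)))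
    (Real.cos (H * (s - t))) (Real.sin (H * (s - t))) h p q hhh hhp hhq hph hqh hpp hqq hpq hqp
    (Real.cosh_sq_sub_sinh_sq _) (Real.cos_sq_add_sin_sq _) hDne]
  match_scalars <;> (field_simp; try ring) <;> tauto

lemma inner_comb (a b e cc : ℝ) (h p q : EuclideanSpace ℝ (Fin 3))
    (hhinner : ⟪h, h⟫ = (1 : ℝ)) (hpp1 : ⟪p, p⟫ = 1 - cc ^ 2) (hqq1 : ⟪q, q⟫ = 1 - cc ^ 2)
    (hhp0 : ⟪h, p⟫ = (0 : ℝ)) (hhq0 : ⟪h, q⟫ = (0 : ℝ)) (hpq0 : ⟪p, q⟫ = (0 : ℝ))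
    (hph0 : ⟪p, h⟫ = (0 : ℝ)) (hqh0 : ⟪q, h⟫ = (0 : ℝ)) (hqp0 : ⟪q, p⟫ = (0 : ℝ)) :
    ⟪a • h + b • p + e • q, a • h + b • p + e • q⟫
      = a ^ 2 + (b ^ 2 + e ^ 2) * (1 - cc ^ 2) := by
  simp only [inner_add_left, inner_add_right, real_inner_smul_left, real_inner_smul_right,
    hhinner, hpp1, hqq1, hhp0, hhq0, hpq0, hph0, hqh0, hqp0]
  ring

end SchemeExactAux

set_option maxHeartbeats 1000000 in
open SchemeExactAux in
theorem scheme_exact_for_constant_field (g H Δt t : ℝ) (hΔt : 0 ≤ Δt)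
    (h : EuclideanSpace ℝ (Fin 3)) (hh : ‖h‖ = 1)
    (m : ℝ → EuclideanSpace ℝ (Fin 3)) (hm : Differentiable ℝ m)
    (hm' : Continuous (deriv m))
    (heq : ∀ s ∈ Set.Icc t (t + Δt), deriv m s =
      (-H) • (cross3 (m s) h + g • cross3 (m s) (cross3 (m s) h)))
    (hnorm : ‖m t‖ = 1) (hmh : -1 < ⟪m t, h⟫) :
    m (t + Δt) =
      ((⟪m t, h⟫ * Real.cosh (g * H * Δt) + Real.sinh (g * H * Δt)) /
        (Real.cosh (g * H * Δt) + ⟪m t, h⟫ * Real.sinh (g * H * Δt))) • h +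
      (1 / (Real.cosh (g * H * Δt) + ⟪m t, h⟫ * Real.sinh (g * H * Δt))) •
        ((Real.cos (H * Δt)) • cross3 h (cross3 (m t) h) +
         (Real.sin (H * Δt)) • cross3 h (cross3 h (cross3 (m t) h))) := by
  classical
  -- basic scalar facts
  have hhinner : ⟪h, h⟫ = (1 : ℝ) := by
    rw [real_inner_self_eq_norm_sq, hh]; norm_num
  have hmm : ⟪m t, m t⟫ = (1 : ℝ) := by
    rw [real_inner_self_eq_norm_sq, hnorm]; norm_num
  have hc1 : ⟪m t, h⟫ ≤ 1 := by
    have := real_inner_le_norm (m t) h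
    rw [hnorm, hh] at this; linarith
  -- inner product facts (before abbreviating)
  have hhp0 : ⟪h, m t - ⟪m t, h⟫ • h⟫ = (0 : ℝ) := by
    rw [inner_sub_right, real_inner_smul_right, hhinner, real_inner_comm h (m t)]; ring
  have hpp1 : ⟪m t - ⟪m t, h⟫ • h, m t - ⟪m t, h⟫ • h⟫ = 1 - ⟪m t, h⟫ ^ 2 := by
    rw [inner_sub_left, inner_sub_right, inner_sub_right, real_inner_smul_left,
      real_inner_smul_left, real_inner_smul_right, real_inner_smul_right, hmm, hhinner,
      real_inner_comm h (m t)]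
    ring
  have hmt_p : cross3 h (cross3 (m t) h) = m t - ⟪m t, h⟫ • h := by
    rw [grassmann, hhinner, real_inner_comm h (m t), one_smul]
  -- abbreviations
  set c : ℝ := ⟪m t, h⟫ with hc_def
  set p : EuclideanSpace ℝ (Fin 3) := m t - c • h with hp_def
  set q : EuclideanSpace ℝ (Fin 3) := cross3 h p with hq_def
  have hph0 : ⟪p, h⟫ = (0 : ℝ) := by rw [real_inner_comm]; exact hhp0
  -- cross product relations
  have hhp : cross3 h p = q := hq_def.symm
  have hhq : cross3 h q = -p := by
    rw [hq_def, grassmann, hhp0, hhinner, zero_smul, one_smul, zero_sub]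
  have hph : cross3 p h = -q := by rw [cross3_anticomm, hhp]
  have hqh : cross3 q h = p := by rw [cross3_anticomm, hhq, neg_neg]
  have hpq : cross3 p q = (1 - c ^ 2) • h := by
    rw [hq_def, grassmann, hpp1, hph0, zero_smul, sub_zero]
  have hqp : cross3 q p = -((1 - c ^ 2) • h) := by rw [cross3_anticomm, hpq]
  have hhh : cross3 h h = 0 := cross3_self h
  have hpp : cross3 p p = 0 := cross3_self p
  have hqq : cross3 q q = 0 := cross3_self q
  -- inner products with q
  have hqh0 : ⟪q, h⟫ = (0 : ℝ) := by rw [hq_def]; exact inner_cross3_left h p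
  have hhq0 : ⟪h, q⟫ = (0 : ℝ) := by rw [real_inner_comm]; exact hqh0
  have hqp0 : ⟪q, p⟫ = (0 : ℝ) := by rw [hq_def]; exact inner_cross3_right h p
  have hpq0 : ⟪p, q⟫ = (0 : ℝ) := by rw [real_inner_comm]; exact hqp0
  have hqq1 : ⟪q, q⟫ = 1 - c ^ 2 := by
    have := lagrange h p
    rw [hhp0, hhinner, hpp1, ← hq_def] at this
    linarith
  -- the candidate solution
  set φ := phiSol g H c t h p q with hφ_def
  have hφderiv : ∀ s : ℝ, HasDerivAt φ
      ((-H) • (cross3 (φ s) h + g • cross3 (φ s) (cross3 (φ s) h))) s :=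
    fun s => phiSol_hasDeriv g H c t hmh hc1 h p q hhh hhp hhq hph hqh hpp hqq hpq hqp s
  have hφt : φ t = m t := by
    rw [hφ_def]
    show _ • h + _ • p + _ • q = m t
    rw [hp_def]
    simp only [sub_self, mul_zero, Real.cosh_zero, Real.sinh_zero, Real.cos_zero,
      Real.sin_zero, mul_one, add_zero, zero_add, div_one, zero_div, zero_smul, one_smul]
    module
  -- φ stays on the unit sphere
  have hφsphere : ∀ s : ℝ, ‖φ s‖ = 1 := by
    intro s
    have hDpos := Dpos c (g * H * (s - t)) hmh hc1
    have hDne := ne_of_gt hDpos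
    have hinner : ⟪φ s, φ s⟫ = (1 : ℝ) := by
      have hval := inner_comb
        ((c * Real.cosh (g * H * (s - t)) + Real.sinh (g * H * (s - t))) /
          (Real.cosh (g * H * (s - t)) + c * Real.sinh (g * H * (s - t))))
        (Real.cos (H * (s - t)) / (Real.cosh (g * H * (s - t)) + c * Real.sinh (g * H * (s - t))))
        (Real.sin (H * (s - t)) / (Real.cosh (g * H * (s - t)) + c * Real.sinh (g * H * (s - t))))
        c h p q hhinner hpp1 hqq1 hhp0 hhq0 hpq0 hph0 hqh0 hqp0
      have hφs : φ s =
          ((c * Real.cosh (g * H * (s - t)) + Real.sinh (g * H * (s - t))) /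
            (Real.cosh (g * H * (s - t)) + c * Real.sinh (g * H * (s - t)))) • h +
          (Real.cos (H * (s - t)) /
            (Real.cosh (g * H * (s - t)) + c * Real.sinh (g * H * (s - t)))) • p +
          (Real.sin (H * (s - t)) /
            (Real.cosh (g * H * (s - t)) + c * Real.sinh (g * H * (s - t)))) • q := rfl
      rw [hφs, hval]
      have hid := Real.cosh_sq_sub_sinh_sq (g * H * (s - t))
      have hCS := Real.cos_sq_add_sin_sq (H * (s - t))
      field_simp
      linear_combination (c ^ 2 - 1) * hid + (1 - c ^ 2) * hCS
    have h2 : ‖φ s‖ ^ 2 = 1 := by rw [← real_inner_self_eq_norm_sq, hinner]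
    nlinarith [norm_nonneg (φ s)]
  -- m stays on the unit sphere on the interval
  have hmsphere : ∀ s ∈ Set.Icc t (t + Δt), ⟪m s, m s⟫ = (1 : ℝ) := by
    have hcont : ContinuousOn (fun s => (⟪m s, m s⟫ : ℝ)) (Set.Icc t (t + Δt)) :=
      (hm.continuous.inner hm.continuous).continuousOn
    have hder : ∀ s ∈ Set.Ico t (t + Δt),
        HasDerivWithinAt (fun s => (⟪m s, m s⟫ : ℝ)) 0 (Set.Ici s) s := by
      intro s hs
      have hd : HasDerivAt (fun s => (⟪m s, m s⟫ : ℝ))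
          (⟪m s, deriv m s⟫ + ⟪deriv m s, m s⟫) s :=
        HasDerivAt.inner ℝ (hm s).hasDerivAt (hm s).hasDerivAt
      have hz : (⟪m s, deriv m s⟫ : ℝ) + ⟪deriv m s, m s⟫ = 0 := by
        rw [heq s (Set.Ico_subset_Icc_self hs)]
        rw [real_inner_comm (m s)]
        have h1 : (⟪m s, cross3 (m s) h⟫ : ℝ) = 0 := by
          rw [real_inner_comm]; exact inner_cross3_left (m s) h
        have h2 : (⟪m s, cross3 (m s) (cross3 (m s) h)⟫ : ℝ) = 0 := by
          rw [real_inner_comm]; exact inner_cross3_left (m s) _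
        rw [real_inner_smul_right, inner_add_right, real_inner_smul_right, h1, h2]
        simp
      rw [← hz]
      exact hd.hasDerivWithinAt
    intro s hs
    have := constant_of_has_deriv_right_zero hcont hder s hs
    rw [this, hmm]
  have hmball : ∀ s ∈ Set.Ico t (t + Δt),
      m s ∈ Metric.closedBall (0 : EuclideanSpace ℝ (Fin 3)) 1 := by
    intro s hs
    rw [Metric.mem_closedBall, dist_zero_right]
    have h2 : ‖m s‖ ^ 2 = 1 := by
      rw [← real_inner_self_eq_norm_sq, hmsphere s (Set.Ico_subset_Icc_self hs)]
    nlinarith [norm_nonneg (m s)]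
  have hφball : ∀ s ∈ Set.Ico t (t + Δt),
      φ s ∈ Metric.closedBall (0 : EuclideanSpace ℝ (Fin 3)) 1 := by
    intro s _
    rw [Metric.mem_closedBall, dist_zero_right, hφsphere s]
  -- uniqueness of ODE solutions
  have hlip : ∀ _s : ℝ, LipschitzOnWith (Real.toNNReal (|H| * (1 + 2 * |g|)))
      (fun x => (-H) • (cross3 x h + g • cross3 x (cross3 x h)))
      (Metric.closedBall (0 : EuclideanSpace ℝ (Fin 3)) 1) :=
    fun _ => vf_lip g H h hh
  have hmcont : ContinuousOn m (Set.Icc t (t + Δt)) := hm.continuous.continuousOn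
  have hmderiv : ∀ s ∈ Set.Ico t (t + Δt),
      HasDerivWithinAt m ((-H) • (cross3 (m s) h + g • cross3 (m s) (cross3 (m s) h)))
        (Set.Ici s) s := by
    intro s hs
    have := (hm s).hasDerivAt
    rw [heq s (Set.Ico_subset_Icc_self hs)] at this
    exact this.hasDerivWithinAt
  have hφcont : ContinuousOn φ (Set.Icc t (t + Δt)) :=
    fun s _ => (hφderiv s).continuousAt.continuousWithinAt
  have hφderiv' : ∀ s ∈ Set.Ico t (t + Δt),
      HasDerivWithinAt φ ((-H) • (cross3 (φ s) h + g • cross3 (φ s) (cross3 (φ s) h)))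
        (Set.Ici s) s :=
    fun s _ => (hφderiv s).hasDerivWithinAt
  have huniq : Set.EqOn m φ (Set.Icc t (t + Δt)) :=
    ODE_solution_unique_of_mem_Icc_right
      (v := fun _ x => (-H) • (cross3 x h + g • cross3 x (cross3 x h)))
      (s := fun _ => Metric.closedBall (0 : EuclideanSpace ℝ (Fin 3)) 1)
      (fun s _ => hlip s) hmcont hmderiv hmball hφcont hφderiv' hφball (hφt.symm)
  have hkey : m (t + Δt) = φ (t + Δt) :=
    huniq ⟨le_add_of_nonneg_right hΔt, le_refl _⟩
  rw [hkey, hφ_def]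
  rw [hmt_p, ← hq_def]
  show _ • h + _ • p + _ • q = _
  simp only [add_sub_cancel_left]
  match_scalars <;> ring
end
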